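/- A monotone valuation v : 2^M → ℝ≥0 is submodular if and only if it is 0-SI; that is, v(j | S) ≥ v(j | T) for all S ⊆ T and j ∉ T if and only if for every price vector p : M → ℝ≥0 and every bundle S that is in local demand given p, both (a) v(T) ≥ p(T) for every T ⊆ S, and (b) v(S) ≥ v(T) − p(T) for every T ⊆ M. -/

import Mathlib

/-- The price of a bundle: `p(S) = Σ_{j∈S} p j`. -/
def bundlePrice {M : Type*} [DecidableEq M] (p : M → ℝ) (S : Finset M) : ℝ :=
  ∑ j ∈ S, p j

/-- A bundle `S` is in local demand for `v` given prices `p` if its utility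
cannot be strictly increased by adding one item, removing one item, or swapping
one item of `S` for one item outside `S`. -/
def InLocalDemand {M : Type*} [Fintype M] [DecidableEq M]
    (v : Finset M → ℝ) (p : M → ℝ) (S : Finset M) : Prop :=
  (∀ j : M, j ∉ S →
    v S - bundlePrice p S ≥ v (insert j S) - bundlePrice p (insert j S)) ∧
  (∀ j ∈ S,
    v S - bundlePrice p S ≥ v (S.erase j) - bundlePrice p (S.erase j)) ∧
  (∀ j ∈ S, ∀ j' : M, j' ∉ S →
    v S - bundlePrice p S ≥
      v (insert j' (S.erase j)) - bundlePrice p (insert j' (S.erase j)))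

/-- Single-step submodularity implies full submodularity. -/
lemma single_to_full {M : Type*} [DecidableEq M] (v : Finset M → ℝ)
    (h1 : ∀ A : Finset M, ∀ b ∉ A, ∀ j ∉ insert b A,
      v (insert j A) - v A ≥ v (insert j (insert b A)) - v (insert b A)) :
    ∀ S T : Finset M, S ⊆ T → ∀ j : M, j ∉ T →
      v (insert j S) - v S ≥ v (insert j T) - v T := by
  intro S T
  induction T using Finset.strongInduction with
  | _ T ih =>
    intro hST j hjT
    by_cases hE : S = T
    · subst hE; exact le_refl _
    · obtain ⟨b, hbT, hbS⟩ := Finset.exists_of_ssubset (hST.ssubset_of_ne hE)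
      have hSe : S ⊆ T.erase b := Finset.subset_erase.mpr ⟨hST, hbS⟩
      have hje : j ∉ T.erase b := fun h => hjT (Finset.mem_of_mem_erase h)
      have h2 := ih (T.erase b) (Finset.erase_ssubset hbT) hSe j hje
      have h3 := h1 (T.erase b) b (Finset.notMem_erase b T) j
        (by rw [Finset.insert_erase hbT]; exact hjT)
      rw [Finset.insert_erase hbT] at h3
      linarith

theorem submodular_iff_zero_SI
    {M : Type*} [Fintype M] [DecidableEq M]
    (v : Finset M → ℝ)
    (hv : ∀ S : Finset M, 0 ≤ v S)
    (hmono : ∀ S T : Finset M, S ⊆ T → v S ≤ v T) :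
    (∀ S T : Finset M, S ⊆ T → ∀ j : M, j ∉ T →
      v (insert j S) - v S ≥ v (insert j T) - v T)
    ↔
    (∀ p : M → ℝ, (∀ j : M, 0 ≤ p j) → ∀ S : Finset M, InLocalDemand v p S →
      (∀ T : Finset M, T ⊆ S → v T ≥ bundlePrice p T) ∧
      (∀ T : Finset M, v S ≥ v T - bundlePrice p T)) := by
  constructor
  · -- submodular → 0-SI
    intro hsub p hp S hS
    obtain ⟨hadd, hrem, _⟩ := hS
    constructor
    · -- (a)
      intro T
      induction T using Finset.induction_on with
      | empty => intro _; simpa [bundlePrice] using hv ∅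
      | @insert a T haT ih =>
        intro hins
        have hTS : T ⊆ S := (Finset.subset_insert a T).trans hins
        have haS : a ∈ S := hins (Finset.mem_insert_self a T)
        have hTe : T ⊆ S.erase a := Finset.subset_erase.mpr ⟨hTS, haT⟩
        have h1 := hsub T (S.erase a) hTe a (Finset.notMem_erase a S)
        rw [Finset.insert_erase haS] at h1
        have h2 := hrem a haS
        have hps : p a + bundlePrice p (S.erase a) = bundlePrice p S :=
          Finset.add_sum_erase S p haS
        have hpi : bundlePrice p (insert a T) = p a + bundlePrice p T := by
          simp [bundlePrice, Finset.sum_insert haT]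
        have := ih hTS
        simp only [bundlePrice] at *
        linarith
    · -- (b)
      have key : ∀ A : Finset M, Disjoint A S →
          v (S ∪ A) ≤ v S + bundlePrice p A := by
        intro A
        induction A using Finset.induction_on with
        | empty => intro _; simp [bundlePrice]
        | @insert a A haA ih =>
          intro hdisj
          have hAS : Disjoint A S :=
            hdisj.mono_left (Finset.subset_insert a A)
          have haS : a ∉ S := fun h =>
            (Finset.disjoint_left.mp hdisj (Finset.mem_insert_self a A)) h
          have haSA : a ∉ S ∪ A := by simp [haS, haA]
          have h1 := hsub S (S ∪ A) Finset.subset_union_left a haSA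
          have h2 := hadd a haS
          have hpi : bundlePrice p (insert a S) = p a + bundlePrice p S := by
            simp [bundlePrice, Finset.sum_insert haS]
          have hpA : bundlePrice p (insert a A) = p a + bundlePrice p A := by
            simp [bundlePrice, Finset.sum_insert haA]
          have hun : S ∪ insert a A = insert a (S ∪ A) := by rw [Finset.union_insert]
          rw [hun, hpA]
          have := ih hAS
          linarith
      intro T
      have hT : T ⊆ S ∪ (T \ S) := by
        intro x hx
        by_cases h : x ∈ S <;> simp [h, hx]
      have hm := hmono T (S ∪ (T \ S)) hT
      have hk := key (T \ S) Finset.sdiff_disjoint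
      have hple : bundlePrice p (T \ S) ≤ bundlePrice p T :=
        Finset.sum_le_sum_of_subset_of_nonneg (Finset.sdiff_subset)
          (fun i _ _ => hp i)
      linarith
  · -- 0-SI → submodular
    intro hSI
    apply single_to_full
    intro A b hbA j hjbA
    have hjA : j ∉ A := fun h => hjbA (Finset.mem_insert_of_mem h)
    have hjb : j ≠ b := fun h => hjbA (h ▸ Finset.mem_insert_self b A)
    by_contra hlt
    push_neg at hlt
    set m1 := v (insert j A) - v A with hm1
    set m2 := v (insert j (insert b A)) - v (insert b A) with hm2
    have hm1n : 0 ≤ m1 := by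
      have := hmono A (insert j A) (Finset.subset_insert j A); linarith
    have hm2n : 0 ≤ m2 := by
      have := hmono (insert b A) (insert j (insert b A))
        (Finset.subset_insert j (insert b A)); linarith
    have hbn : 0 ≤ v (insert b A) - v A := by
      have := hmono A (insert b A) (Finset.subset_insert b A); linarith
    set p : M → ℝ := fun i =>
      if i ∈ A then 0 else if i = j then (m1 + m2) / 2
        else if i = b then v (insert b A) - v A else v Finset.univ with hpdef
    have hp : ∀ i : M, 0 ≤ p i := by
      intro i
      simp only [hpdef]
      split_ifs with h1 h2 h3
      · exact le_refl 0
      · linarith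
      · exact hbn
      · exact hv _
    have hpA : bundlePrice p A = 0 :=
      Finset.sum_eq_zero (fun i hi => by simp [hpdef, hi])
    -- key: adding any item outside A is unprofitable
    have hb1 : ∀ j' : M, j' ∉ A → v (insert j' A) ≤ v A + p j' := by
      intro j' hj'
      by_cases h1 : j' = j
      · subst h1
        have hpv : p j' = (m1 + m2) / 2 := by simp [hpdef, hj']
        rw [hpv]; linarith
      · by_cases h2 : j' = b
        · subst h2
          have hpv : p j' = v (insert j' A) - v A := by simp [hpdef, hj', h1]
          rw [hpv]; linarith
        · have hpv : p j' = v Finset.univ := by simp [hpdef, hj', h1, h2]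
          rw [hpv]
          have := hmono (insert j' A) Finset.univ (Finset.subset_univ _)
          have := hv A
          linarith
    have hld : InLocalDemand v p A := by
      refine ⟨?_, ?_, ?_⟩
      · intro j' hj'
        have hpi : bundlePrice p (insert j' A) = p j' + bundlePrice p A := by
          simp [bundlePrice, Finset.sum_insert hj']
        have := hb1 j' hj'
        rw [hpi]
        linarith
      · intro i hi
        have hpe : bundlePrice p (A.erase i) = 0 :=
          Finset.sum_eq_zero (fun x hx => by
            simp [hpdef, Finset.mem_of_mem_erase hx])
        have := hmono (A.erase i) A (Finset.erase_subset i A)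
        rw [hpe, hpA]
        linarith
      · intro i hi j' hj'
        have hj'e : j' ∉ A.erase i := fun h => hj' (Finset.mem_of_mem_erase h)
        have hpe : bundlePrice p (A.erase i) = 0 :=
          Finset.sum_eq_zero (fun x hx => by
            simp [hpdef, Finset.mem_of_mem_erase hx])
        have hpi : bundlePrice p (insert j' (A.erase i)) = p j' := by
          simp [bundlePrice, Finset.sum_insert hj'e]
          simpa [bundlePrice] using hpe
        have hsub2 : insert j' (A.erase i) ⊆ insert j' A :=
          Finset.insert_subset_insert j' (Finset.erase_subset i A)
        have := hmono _ _ hsub2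
        have := hb1 j' hj'
        rw [hpi, hpA]
        linarith
    obtain ⟨_, hb⟩ := hSI p hp A hld
    have hfin := hb (insert j (insert b A))
    have hbj : b ≠ j := fun h => hjb h.symm
    have hpj : p j = (m1 + m2) / 2 := by simp [hpdef, hjA]
    have hpb : p b = v (insert b A) - v A := by simp [hpdef, hbA, hbj]
    have hpT : bundlePrice p (insert j (insert b A))
        = p j + p b + bundlePrice p A := by
      rw [bundlePrice, Finset.sum_insert hjbA, Finset.sum_insert hbA]
      ring_nf
      rfl
    rw [hpT, hpA, hpj, hpb] at hfin
    linarith
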